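/- Let V be an n×n symmetric matrix (n ≥ 3) with off-diagonal entries v_{ij} satisfying 1/b ≤ v_{ij} ≤ 1/c for positive constants b ≥ c, and diagonal entries v_{ii} = Σ_{j≠i} v_{ij}. Let S = diag(1/v_{11},…,1/v_{nn}). Then every entry of V⁻¹ - S is bounded in absolute value by (2b²/(c(n-1)²))·(nb/(2(n-2)c) + 1/2). -/

import Mathlib

open Finset Matrix
set_option maxHeartbeats 1000000

theorem inverse_approx_diagonal (n : ℕ) (hn : 3 ≤ n) (b c : ℝ) (hc : 0 < c) (hcb : c ≤ b)
    (V : Matrix (Fin n) (Fin n) ℝ)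
    (hsymm : ∀ i j, V i j = V j i)
    (hoff : ∀ i j, i ≠ j → 1 / b ≤ V i j ∧ V i j ≤ 1 / c)
    (hdiag : ∀ i, V i i = ∑ j ∈ univ.filter (· ≠ i), V i j) :
    ∀ i j, |(V⁻¹ - Matrix.diagonal fun k => 1 / V k k) i j|
      ≤ 2 * b ^ 2 / (c * ((n : ℝ) - 1) ^ 2)
          * ((n : ℝ) * b / (2 * ((n : ℝ) - 2) * c) + 1 / 2) := by
  have hb : (0:ℝ) < b := lt_of_lt_of_le hc hcb
  have hn3 : (3:ℝ) ≤ (n:ℝ) := by exact_mod_cast hn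
  have hn1 : (0:ℝ) < (n:ℝ) - 1 := by linarith
  have hn2 : (0:ℝ) < (n:ℝ) - 2 := by linarith
  set A : Matrix (Fin n) (Fin n) ℝ := Matrix.of (fun i j => if i = j then 0 else V i j) with hA
  have hAapp : ∀ i j, A i j = if i = j then 0 else V i j := fun i j => rfl
  have hAsymm : ∀ i j, A i j = A j i := by
    intro i j
    by_cases h : i = j
    · subst h; rfl
    · simp only [hAapp, if_neg h, if_neg (Ne.symm h)]; exact hsymm i j
  have hrowsum : ∀ i, ∑ j, A i j = V i i := by
    intro i
    rw [hdiag i, Finset.sum_filter]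
    refine Finset.sum_congr rfl fun j _ => ?_
    by_cases h : i = j
    · simp [hAapp, h]
    · simp [hAapp, h, Ne.symm h]
  -- lower bound on diagonal
  have hvlb : ∀ i, ((n:ℝ)-1)/b ≤ V i i := by
    intro i
    rw [hdiag i]
    have hcard : (univ.filter (· ≠ i)).card = n - 1 := by
      rw [Finset.filter_ne', Finset.card_erase_of_mem (Finset.mem_univ i), Finset.card_univ,
        Fintype.card_fin]
    calc ((n:ℝ)-1)/b = ((n-1 : ℕ) : ℝ) * (1/b) := by
          have h1 : 1 ≤ n := by omega
          push_cast [h1]; ring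
      _ = ∑ _j ∈ univ.filter (· ≠ i), (1/b) := by rw [Finset.sum_const, hcard, nsmul_eq_mul]
      _ ≤ ∑ j ∈ univ.filter (· ≠ i), V i j := by
          refine Finset.sum_le_sum fun j hj => ?_
          exact (hoff i j (Ne.symm (Finset.mem_filter.mp hj).2)).1
  have hvpos : ∀ i, 0 < V i i := fun i => lt_of_lt_of_le (by positivity) (hvlb i)
  -- quadratic form lower bound
  have hquad : ∀ x : Fin n → ℝ, (((n:ℝ)-2)/b) * (∑ i, x i ^ 2) ≤ x ⬝ᵥ V.mulVec x := by
    intro x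
    have hT : x ⬝ᵥ V.mulVec x = ∑ i, ∑ j, V i j * (x i * x j) := by
      simp only [dotProduct, Matrix.mulVec, Finset.mul_sum]
      exact Finset.sum_congr rfl fun i _ => Finset.sum_congr rfl fun j _ => by ring
    have s1 : ∑ i, ∑ j, A i j * x i ^ 2 = ∑ i, V i i * x i ^ 2 := by
      refine Finset.sum_congr rfl fun i _ => ?_
      rw [← Finset.sum_mul, hrowsum i]
    have s3 : ∑ i, ∑ j, A i j * x j ^ 2 = ∑ i, V i i * x i ^ 2 := by
      rw [Finset.sum_comm]
      refine Finset.sum_congr rfl fun j _ => ?_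
      rw [Finset.sum_congr rfl fun i _ => by rw [hAsymm i j], ← Finset.sum_mul, hrowsum j]
    have s2 : ∑ i, ∑ j, A i j * (x i * x j)
        = (∑ i, ∑ j, V i j * (x i * x j)) - ∑ i, V i i * x i ^ 2 := by
      rw [eq_sub_iff_add_eq, ← Finset.sum_add_distrib]
      refine Finset.sum_congr rfl fun i _ => ?_
      have h0 : ∑ j, V i j * (x i * x j)
          = ∑ j, (A i j * (x i * x j) + (if i = j then V i i * x i ^ 2 else 0)) := by
        refine Finset.sum_congr rfl fun j _ => ?_
        by_cases h : i = j
        · subst h; rw [hAapp, if_pos rfl, if_pos rfl]; ring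
        · simp [hAapp, h]
      rw [h0, Finset.sum_add_distrib, Finset.sum_ite_eq univ i (fun _ => V i i * x i ^ 2)]
      simp
    have hid : ∑ i, ∑ j, A i j * (x i + x j) ^ 2
        = 2 * ∑ i, ∑ j, V i j * (x i * x j) := by
      calc ∑ i, ∑ j, A i j * (x i + x j) ^ 2
          = ∑ i, ∑ j, (A i j * x i ^ 2 + A i j * x j ^ 2 + 2 * (A i j * (x i * x j))) :=
            Finset.sum_congr rfl fun i _ => Finset.sum_congr rfl fun j _ => by ring
        _ = (∑ i, ∑ j, A i j * x i ^ 2) + (∑ i, ∑ j, A i j * x j ^ 2)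
              + 2 * ∑ i, ∑ j, A i j * (x i * x j) := by
            rw [Finset.mul_sum, ← Finset.sum_add_distrib, ← Finset.sum_add_distrib]
            refine Finset.sum_congr rfl fun i _ => ?_
            rw [Finset.mul_sum, ← Finset.sum_add_distrib, ← Finset.sum_add_distrib]
        _ = 2 * ∑ i, ∑ j, V i j * (x i * x j) := by rw [s1, s3, s2]; ring
    have hlow : ∑ i, ∑ j, (if i = j then (0:ℝ) else 1/b) * (x i + x j) ^ 2
        ≤ ∑ i, ∑ j, A i j * (x i + x j) ^ 2 := by
      refine Finset.sum_le_sum fun i _ => Finset.sum_le_sum fun j _ => ?_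
      by_cases h : i = j
      · simp [hAapp, h]
      · have h1 : 1/b ≤ A i j := by rw [hAapp, if_neg h]; exact (hoff i j h).1
        simp only [if_neg h]
        exact mul_le_mul_of_nonneg_right h1 (sq_nonneg _)
    have hcompute : ∑ i, ∑ j, (if i = j then (0:ℝ) else 1/b) * (x i + x j) ^ 2
        = (1/b) * ((2*(n:ℝ) - 4) * (∑ i, x i ^ 2) + 2 * (∑ i, x i)^2) := by
      have step : ∀ i, ∑ j, (if i = j then (0:ℝ) else 1/b) * (x i + x j) ^ 2
          = (1/b) * (∑ j, (x i + x j)^2) - (1/b) * (2 * x i)^2 := by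
        intro i
        have h0 : ∀ j, (if i = j then (0:ℝ) else 1/b) * (x i + x j) ^ 2
            = (1/b) * (x i + x j)^2 - (if i = j then (1/b) * (x i + x j)^2 else 0) := by
          intro j; by_cases h : i = j <;> simp [h]
        rw [Finset.sum_congr rfl fun j _ => h0 j, Finset.sum_sub_distrib,
          Finset.sum_ite_eq univ i (fun j => (1/b) * (x i + x j)^2)]
        simp only [Finset.mem_univ, if_true, ← Finset.mul_sum]
        congr 1
        ring
      rw [Finset.sum_congr rfl fun i _ => step i, Finset.sum_sub_distrib]
      have e1 : ∑ i, (1/b) * (∑ j, (x i + x j)^2)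
          = (1/b) * (2*(n:ℝ) * (∑ i, x i ^ 2) + 2 * (∑ i, x i)^2) := by
        rw [← Finset.mul_sum]
        congr 1
        have h1 : ∀ i, ∑ j, (x i + x j)^2
            = (n:ℝ) * x i ^ 2 + 2 * x i * (∑ j, x j) + ∑ j, x j ^ 2 := by
          intro i
          rw [Finset.sum_congr rfl fun j _ => (by ring :
            (x i + x j)^2 = x i ^2 + 2 * x i * x j + x j ^ 2), Finset.sum_add_distrib,
            Finset.sum_add_distrib, Finset.sum_const, ← Finset.mul_sum]
          simp [Finset.card_univ, nsmul_eq_mul]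
        rw [Finset.sum_congr rfl fun i _ => h1 i, Finset.sum_add_distrib,
          Finset.sum_add_distrib, Finset.sum_const, ← Finset.mul_sum, ← Finset.sum_mul]
        simp only [Finset.card_univ, Fintype.card_fin, nsmul_eq_mul]
        rw [← Finset.mul_sum]
        ring
      have e2 : ∑ i, (1/b) * (2 * x i)^2 = (1/b) * (4 * ∑ i, x i ^ 2) := by
        rw [← Finset.mul_sum]
        congr 1
        rw [Finset.mul_sum]
        exact Finset.sum_congr rfl fun i _ => by ring
      rw [e1, e2]
      ring
    have hsq : (0:ℝ) ≤ (∑ i, x i)^2 := sq_nonneg _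
    have hxs : (0:ℝ) ≤ ∑ i, x i ^ 2 := Finset.sum_nonneg fun i _ => sq_nonneg _
    have hbinv : (0:ℝ) < 1/b := by positivity
    have hchain := le_trans (le_of_eq hcompute.symm) (le_trans hlow (le_of_eq hid))
    have hfact : (1/b) * ((2*(n:ℝ) - 4) * (∑ i, x i ^ 2) + 2 * (∑ i, x i)^2)
        = 2*((((n:ℝ)-2)/b) * (∑ i, x i ^ 2)) + 2*((1/b) * (∑ i, x i)^2) := by
      field_simp
      ring
    have hpp : 0 ≤ (1/b) * (∑ i, x i)^2 := mul_nonneg (le_of_lt hbinv) hsq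
    rw [hT]
    linarith [hchain, hfact, hpp]
  -- positive definiteness and invertibility
  have hherm : V.IsHermitian := by
    ext i j
    simpa using (hsymm j i)
  have hPD : V.PosDef := by
    refine Matrix.PosDef.of_dotProduct_mulVec_pos hherm fun x hx => ?_
    have hxs : 0 < ∑ i, x i ^ 2 := by
      rcases Function.ne_iff.mp hx with ⟨i, hi⟩
      have h0 : 0 < x i ^ 2 := by
        have : x i ≠ 0 := hi
        positivity
      exact lt_of_lt_of_le h0
        (Finset.single_le_sum (fun j _ => sq_nonneg (x j)) (Finset.mem_univ i))
    have h1 := hquad x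
    have hpos : 0 < (((n:ℝ)-2)/b) * ∑ i, x i ^ 2 := by positivity
    simpa using lt_of_lt_of_le hpos h1
  have hdet : IsUnit V.det := isUnit_iff_ne_zero.mpr (ne_of_gt hPD.det_pos)
  have hVVinv : V * V⁻¹ = 1 := Matrix.mul_nonsing_inv V hdet
  have hVinvV : V⁻¹ * V = 1 := Matrix.nonsing_inv_mul V hdet
  have hVT : Vᵀ = V := by
    ext i j
    exact hsymm j i
  have hVinvT : (V⁻¹)ᵀ = V⁻¹ := by
    rw [Matrix.transpose_nonsing_inv, hVT]
  set K : ℝ := b / ((n:ℝ) - 2) with hK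
  have hKpos : 0 < K := by positivity
  have hKinv : ((n:ℝ)-2)/b = 1/K := by rw [hK, one_div_div]
  -- quadratic upper bound for the inverse
  have hinvquad : ∀ z : Fin n → ℝ, (0 ≤ z ⬝ᵥ V⁻¹.mulVec z)
      ∧ z ⬝ᵥ V⁻¹.mulVec z ≤ K * ∑ i, z i ^ 2 := by
    intro z
    set w := V⁻¹.mulVec z with hw
    have hVw : V.mulVec w = z := by
      rw [hw, Matrix.mulVec_mulVec, hVVinv, Matrix.one_mulVec]
    have hq : z ⬝ᵥ w = w ⬝ᵥ V.mulVec w := by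
      rw [← hVw]
      exact dotProduct_comm _ _
    have hlow := hquad w
    rw [← hq, hKinv] at hlow
    have hwnn : 0 ≤ ∑ i, w i ^ 2 := Finset.sum_nonneg fun i _ => sq_nonneg _
    have hq0 : 0 ≤ z ⬝ᵥ w :=
      le_trans (mul_nonneg (one_div_nonneg.mpr (le_of_lt hKpos)) hwnn) hlow
    refine ⟨hq0, ?_⟩
    have young : z ⬝ᵥ w ≤ (1/(2*K)) * (∑ i, w i ^ 2) + (K/2) * (∑ i, z i ^ 2) := by
      have h1 : z ⬝ᵥ w = ∑ i, z i * w i := rfl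
      rw [h1, Finset.mul_sum, Finset.mul_sum, ← Finset.sum_add_distrib]
      refine Finset.sum_le_sum fun i _ => ?_
      have key : 1/(2*K) * w i ^ 2 + K/2 * z i ^ 2 - z i * w i
          = (1/(2*K)) * (w i - K * z i)^2 := by
        field_simp
        ring
      nlinarith [mul_nonneg (le_of_lt (by positivity : (0:ℝ) < 1/(2*K)))
        (sq_nonneg (w i - K * z i))]
    have h2 : 1/(2*K) * (∑ i, w i ^ 2) = (1/K * (∑ i, w i ^ 2))/2 := by ring
    linarith
  -- bilinear bound for the inverse
  have hMsymm : ∀ p q : Fin n → ℝ, p ⬝ᵥ V⁻¹.mulVec q = q ⬝ᵥ V⁻¹.mulVec p := by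
    intro p q
    rw [Matrix.dotProduct_mulVec, ← Matrix.mulVec_transpose, hVinvT, dotProduct_comm]
  have hbil : ∀ u v : Fin n → ℝ, |u ⬝ᵥ V⁻¹.mulVec v|
      ≤ K * (((∑ i, u i ^ 2) + (∑ i, v i ^ 2))/2) := by
    intro u v
    have hp := (hinvquad (u+v)).2
    have hp0 := (hinvquad (u+v)).1
    have hm := (hinvquad (u-v)).2
    have hm0 := (hinvquad (u-v)).1
    have e1 : (u + v) ⬝ᵥ V⁻¹.mulVec (u + v)
        = u ⬝ᵥ V⁻¹.mulVec u + 2 * (u ⬝ᵥ V⁻¹.mulVec v) + v ⬝ᵥ V⁻¹.mulVec v := by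
      rw [Matrix.mulVec_add, dotProduct_add, add_dotProduct,
        add_dotProduct, hMsymm v u]
      ring
    have e2 : (u - v) ⬝ᵥ V⁻¹.mulVec (u - v)
        = u ⬝ᵥ V⁻¹.mulVec u - 2 * (u ⬝ᵥ V⁻¹.mulVec v) + v ⬝ᵥ V⁻¹.mulVec v := by
      rw [Matrix.mulVec_sub, dotProduct_sub, sub_dotProduct,
        sub_dotProduct, hMsymm v u]
      ring
    rw [e1] at hp hp0
    rw [e2] at hm hm0
    have hs1 : ∑ i, (u+v) i ^ 2 ≤ 2*((∑ i, u i ^ 2) + (∑ i, v i ^ 2)) := by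
      calc ∑ i, (u+v) i ^ 2 ≤ ∑ i, (2 * u i ^ 2 + 2 * v i ^ 2) := by
            refine Finset.sum_le_sum fun i _ => ?_
            have : (u+v) i = u i + v i := rfl
            rw [this]
            nlinarith [sq_nonneg (u i - v i)]
        _ = 2*((∑ i, u i ^ 2) + (∑ i, v i ^ 2)) := by
            rw [Finset.sum_add_distrib, ← Finset.mul_sum, ← Finset.mul_sum]
            ring
    have hs2 : ∑ i, (u-v) i ^ 2 ≤ 2*((∑ i, u i ^ 2) + (∑ i, v i ^ 2)) := by
      calc ∑ i, (u-v) i ^ 2 ≤ ∑ i, (2 * u i ^ 2 + 2 * v i ^ 2) := by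
            refine Finset.sum_le_sum fun i _ => ?_
            have : (u-v) i = u i - v i := rfl
            rw [this]
            nlinarith [sq_nonneg (u i + v i)]
        _ = 2*((∑ i, u i ^ 2) + (∑ i, v i ^ 2)) := by
            rw [Finset.sum_add_distrib, ← Finset.mul_sum, ← Finset.mul_sum]
            ring
    have hmul1 := mul_le_mul_of_nonneg_left hs1 (le_of_lt hKpos)
    have hmul2 := mul_le_mul_of_nonneg_left hs2 (le_of_lt hKpos)
    rw [abs_le]
    constructor
    · linarith [hm, hp0, hmul2]
    · linarith [hp, hm0, hmul1]
  -- matrix identities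
  set S : Matrix (Fin n) (Fin n) ℝ := Matrix.diagonal (fun k => 1 / V k k) with hS
  set D : Matrix (Fin n) (Fin n) ℝ := Matrix.diagonal (fun k => V k k) with hD
  have hDS : D * S = 1 := by
    rw [hD, hS, Matrix.diagonal_mul_diagonal]
    have : (fun i => V i i * (1 / V i i)) = fun _ : Fin n => (1:ℝ) := by
      funext i
      exact mul_one_div_cancel (ne_of_gt (hvpos i))
    rw [this, Matrix.diagonal_one]
  have hSD : S * D = 1 := by
    rw [hD, hS, Matrix.diagonal_mul_diagonal]
    have : (fun i => 1 / V i i * V i i) = fun _ : Fin n => (1:ℝ) := by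
      funext i
      exact one_div_mul_cancel (ne_of_gt (hvpos i))
    rw [this, Matrix.diagonal_one]
  have hVDA : V = D + A := by
    ext i j
    by_cases h : i = j
    · subst h
      simp [hD, hAapp, Matrix.diagonal_apply_eq]
    · simp [hD, hAapp, h, Matrix.diagonal_apply_ne _ h]
  have h1 : V⁻¹ = S - V⁻¹ * (A * S) := by
    have e : V * S = 1 + A * S := by
      conv_lhs => rw [hVDA]
      rw [Matrix.add_mul, hDS]
    have e2 : V⁻¹ * (V * S) = V⁻¹ + V⁻¹ * (A * S) := by
      rw [e, Matrix.mul_add, Matrix.mul_one]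
    have e3 : V⁻¹ * (V * S) = S := by rw [← Matrix.mul_assoc, hVinvV, Matrix.one_mul]
    rw [e3] at e2
    rw [eq_sub_iff_add_eq]
    exact e2.symm
  have h2 : V⁻¹ = S - S * (A * V⁻¹) := by
    have e : S * V = 1 + S * A := by
      conv_lhs => rw [hVDA]
      rw [Matrix.mul_add, hSD]
    have e2 : (S * V) * V⁻¹ = V⁻¹ + (S * A) * V⁻¹ := by
      rw [e, Matrix.add_mul, Matrix.one_mul]
    have e3 : (S * V) * V⁻¹ = S := by rw [Matrix.mul_assoc, hVVinv, Matrix.mul_one]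
    rw [e3] at e2
    rw [eq_sub_iff_add_eq, ← Matrix.mul_assoc]
    exact e2.symm
  have key : V⁻¹ - S = S * ((A * (V⁻¹ * A)) * S) - S * (A * S) := by
    conv_lhs => rw [h2, h1]
    noncomm_ring
  -- entrywise bounds
  have hAb : ∀ k l, |A k l| ≤ 1/c := by
    intro k l
    by_cases h : k = l
    · rw [hAapp, if_pos h, abs_zero]
      positivity
    · rw [hAapp, if_neg h]
      have h1 := (hoff k l h).1
      have h2 := (hoff k l h).2
      have hbp : (0:ℝ) < 1/b := by positivity
      have hcp : (0:ℝ) < 1/c := by positivity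
      rw [abs_le]
      constructor <;> linarith
  have hrowsq : ∀ i, ∑ k, (A i k)^2 ≤ ((n:ℝ)-1)/c^2 := by
    intro i
    calc ∑ k, (A i k)^2 ≤ ∑ k, (if i = k then (0:ℝ) else 1/c^2) := by
          refine Finset.sum_le_sum fun k _ => ?_
          by_cases h : i = k
          · rw [if_pos h, hAapp, if_pos h]
            norm_num
          · rw [if_neg h]
            have := hAb i k
            have h2 : (A i k)^2 = |A i k|^2 := (sq_abs _).symm
            rw [h2]
            calc |A i k|^2 ≤ (1/c)^2 := pow_le_pow_left₀ (abs_nonneg _) this 2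
              _ = 1/c^2 := by rw [div_pow, one_pow]
      _ = ((n:ℝ)-1)/c^2 := by
          have h0 : ∀ k : Fin n, (if i = k then (0:ℝ) else 1/c^2)
              = 1/c^2 - (if i = k then 1/c^2 else 0) := by
            intro k; by_cases h : i = k <;> simp [h]
          rw [Finset.sum_congr rfl fun k _ => h0 k, Finset.sum_sub_distrib,
            Finset.sum_const, Finset.sum_ite_eq univ i (fun _ => 1/c^2)]
          simp only [Finset.card_univ, Fintype.card_fin, nsmul_eq_mul, Finset.mem_univ, if_true]
          ring
  -- the final entrywise estimate
  intro i j
  have hSii : 1 / V i i ≤ b/((n:ℝ)-1) := by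
    have h0 := one_div_le_one_div_of_le (by positivity) (hvlb i)
    rwa [one_div_div] at h0
  have hSjj : 1 / V j j ≤ b/((n:ℝ)-1) := by
    have h0 := one_div_le_one_div_of_le (by positivity) (hvlb j)
    rwa [one_div_div] at h0
  have hSiipos : 0 < 1 / V i i := by
    have := hvpos i
    positivity
  have hSjjpos : 0 < 1 / V j j := by
    have := hvpos j
    positivity
  have hentry : (V⁻¹ - S) i j
      = (1 / V i i) * ((A * (V⁻¹ * A)) i j * (1 / V j j))
        - (1 / V i i) * (A i j * (1 / V j j)) := by
    rw [key, Matrix.sub_apply, hS, Matrix.diagonal_mul, Matrix.diagonal_mul,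
      Matrix.mul_diagonal, Matrix.mul_diagonal]
  have hmid : (A * (V⁻¹ * A)) i j = (fun k => A i k) ⬝ᵥ V⁻¹.mulVec (fun l => A l j) := by
    rfl
  have hcolsq : ∑ l, (A l j)^2 ≤ ((n:ℝ)-1)/c^2 := by
    calc ∑ l, (A l j)^2 = ∑ l, (A j l)^2 := by
          exact Finset.sum_congr rfl fun l _ => by rw [hAsymm]
      _ ≤ ((n:ℝ)-1)/c^2 := hrowsq j
  have hQ : |(A * (V⁻¹ * A)) i j| ≤ K * (((n:ℝ)-1)/c^2) := by
    rw [hmid]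
    refine le_trans (hbil _ _) ?_
    have hsum : ((∑ k, (A i k) ^ 2) + (∑ l, (A l j) ^ 2))/2 ≤ ((n:ℝ)-1)/c^2 := by
      have := hrowsq i
      linarith [hcolsq]
    exact mul_le_mul_of_nonneg_left hsum (le_of_lt hKpos)
  have hQ0 : (0:ℝ) ≤ K * (((n:ℝ)-1)/c^2) := by positivity
  have habs : |(V⁻¹ - S) i j|
      ≤ (b/((n:ℝ)-1)) * ((K * (((n:ℝ)-1)/c^2)) * (b/((n:ℝ)-1)))
        + (b/((n:ℝ)-1)) * ((1/c) * (b/((n:ℝ)-1))) := by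
    rw [hentry]
    refine le_trans (abs_sub _ _) ?_
    have t1 : |(1 / V i i) * ((A * (V⁻¹ * A)) i j * (1 / V j j))|
        ≤ (b/((n:ℝ)-1)) * ((K * (((n:ℝ)-1)/c^2)) * (b/((n:ℝ)-1))) := by
      rw [abs_mul, abs_mul, abs_of_pos hSiipos, abs_of_pos hSjjpos]
      exact mul_le_mul hSii (mul_le_mul hQ hSjj (le_of_lt hSjjpos) hQ0)
        (mul_nonneg (abs_nonneg _) (le_of_lt hSjjpos)) (by positivity)
    have t2 : |(1 / V i i) * (A i j * (1 / V j j))|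
        ≤ (b/((n:ℝ)-1)) * ((1/c) * (b/((n:ℝ)-1))) := by
      rw [abs_mul, abs_mul, abs_of_pos hSiipos, abs_of_pos hSjjpos]
      exact mul_le_mul hSii (mul_le_mul (hAb i j) hSjj (le_of_lt hSjjpos) (by positivity))
        (mul_nonneg (abs_nonneg _) (le_of_lt hSjjpos)) (by positivity)
    linarith
  refine le_trans habs ?_
  have e1' : (b/((n:ℝ)-1)) * ((K * (((n:ℝ)-1)/c^2)) * (b/((n:ℝ)-1)))
      = b^3/(((n:ℝ)-1)*((n:ℝ)-2)*c^2) := by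
    rw [hK]
    field_simp
  have e2' : (b/((n:ℝ)-1)) * ((1/c) * (b/((n:ℝ)-1))) = b^2/(c*((n:ℝ)-1)^2) := by
    field_simp
  have split : 2*b^2/(c*((n:ℝ)-1)^2) * ((n:ℝ)*b/(2*((n:ℝ)-2)*c) + 1/2)
      = (n:ℝ)*b^3/(c^2*((n:ℝ)-1)^2*((n:ℝ)-2)) + b^2/(c*((n:ℝ)-1)^2) := by
    field_simp
  rw [e1', e2', split]
  have hle : b^3/(((n:ℝ)-1)*((n:ℝ)-2)*c^2) ≤ (n:ℝ)*b^3/(c^2*((n:ℝ)-1)^2*((n:ℝ)-2)) := by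
    rw [div_le_div_iff₀ (by positivity) (by positivity)]
    nlinarith [mul_pos (mul_pos (pow_pos hb 3) (pow_pos hc 2)) (mul_pos hn1 hn2)]
  linarith
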